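/- Under the hypotheses of the decomposition identity, taking π to be the (S ∪ {j})-active policy for j ∉ S yields F_p^{S∪{j}} = F_p^S + f_j^S · x_{p,j}^{1, S∪{j}}, where x_{p,j}^{1,S∪{j}} ≥ 0 is the discounted occupation measure of the active action in state j under the (S∪{j})-active policy with initial distribution p. Analogously, G_p^{S∪{j}} = G_p^S + g_j^S · x_{p,j}^{1,S∪{j}} for the resource metric. -/
import Mathlib


open Matrix

/-- Lemma 4(a): for `j ∉ S`, `F_p^{S∪{j}} = F_p^S + f_j^S · x_{p,j}^{1,S∪{j}}`
and `G_p^{S∪{j}} = G_p^S + g_j^S · x_{p,j}^{1,S∪{j}}`, where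
`x_{p,j}^{1,S∪{j}} = (H^{S∪{j}} *ᵥ p)_j ≥ 0` is the discounted occupation
measure of the active action at `j` under the `(S∪{j})`-active policy. -/


lemma unit_one_sub {n : ℕ} (M : Matrix (Fin n) (Fin n) ℝ)
    (hnn : ∀ i j, 0 ≤ M i j) (hrs : ∀ i, ∑ j, M i j < 1) :
    IsUnit (1 - M).det := by
  rw [isUnit_iff_ne_zero]
  intro hdet
  obtain ⟨v, hv0, hv⟩ := (Matrix.exists_mulVec_eq_zero_iff).2 hdet
  have hvM : ∀ i, v i = ∑ k, M i k * v k := by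
    intro i
    have h := congrFun hv i
    rw [Matrix.sub_mulVec] at h
    simpa [Matrix.one_mulVec, Matrix.mulVec, dotProduct, sub_eq_zero] using h
  obtain ⟨i0, hi0⟩ := Function.ne_iff.mp hv0
  obtain ⟨i, -, hi⟩ := Finset.exists_max_image Finset.univ (fun k => |v k|)
    ⟨i0, Finset.mem_univ i0⟩
  have hpos : 0 < |v i| := lt_of_lt_of_le (abs_pos.2 hi0) (hi i0 (Finset.mem_univ i0))
  have hle : |v i| ≤ (∑ k, M i k) * |v i| := by
    calc |v i| = |∑ k, M i k * v k| := by rw [← hvM i]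
    _ ≤ ∑ k, |M i k * v k| := Finset.abs_sum_le_sum_abs _ _
    _ = ∑ k, M i k * |v k| := by
        refine Finset.sum_congr rfl fun k _ => ?_
        rw [abs_mul, abs_of_nonneg (hnn i k)]
    _ ≤ ∑ k, M i k * |v i| := by
        refine Finset.sum_le_sum fun k _ => ?_
        exact mul_le_mul_of_nonneg_left (hi k (Finset.mem_univ k)) (hnn i k)
    _ = (∑ k, M i k) * |v i| := by rw [Finset.sum_mul]
  nlinarith [hrs i]

lemma nonneg_of_fix {n : ℕ} (M : Matrix (Fin n) (Fin n) ℝ)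
    (hnn : ∀ i j, 0 ≤ M i j) (hrs : ∀ i, ∑ j, M i j < 1)
    (b y : Fin n → ℝ) (hb : ∀ i, 0 ≤ b i)
    (hy : (1 - M) *ᵥ y = b) : ∀ i, 0 ≤ y i := by
  by_contra h
  push_neg at h
  obtain ⟨i0, hi0⟩ := h
  obtain ⟨i, -, hi⟩ := Finset.exists_min_image Finset.univ y ⟨i0, Finset.mem_univ i0⟩
  have hyi : y i < 0 := lt_of_le_of_lt (hi i0 (Finset.mem_univ i0)) hi0
  have heq : y i - ∑ k, M i k * y k = b i := by
    have h := congrFun hy i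
    rw [Matrix.sub_mulVec] at h
    simpa [Matrix.one_mulVec, Matrix.mulVec, dotProduct] using h
  have h1 : (∑ k, M i k) * y i ≤ ∑ k, M i k * y k := by
    rw [Finset.sum_mul]
    exact Finset.sum_le_sum fun k _ =>
      mul_le_mul_of_nonneg_left (hi k (Finset.mem_univ k)) (hnn i k)
  nlinarith [hrs i, hb i, Finset.sum_nonneg fun k (_ : k ∈ Finset.univ) => hnn i k]

lemma inv_entry_nonneg {n : ℕ} (M : Matrix (Fin n) (Fin n) ℝ)
    (hnn : ∀ i j, 0 ≤ M i j) (hrs : ∀ i, ∑ j, M i j < 1) :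
    ∀ i j, 0 ≤ (1 - M)⁻¹ i j := by
  intro i j
  have hu := unit_one_sub M hnn hrs
  have h1 : (1 - M) *ᵥ ((1 - M)⁻¹ *ᵥ Pi.single j 1) = Pi.single j 1 := by
    rw [Matrix.mulVec_mulVec, Matrix.mul_nonsing_inv _ hu, Matrix.one_mulVec]
  have hb : ∀ k, (0:ℝ) ≤ (Pi.single j 1 : Fin n → ℝ) k := by
    intro k
    simp only [Pi.single_apply]
    split <;> norm_num
  have := nonneg_of_fix M hnn hrs _ _ hb h1 i
  simpa [Matrix.mulVec_single] using this

lemma main_decomp {n : ℕ} (Ψ0 Ψ1 : Matrix (Fin n) (Fin n) ℝ)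
    (h0nn : ∀ i j, 0 ≤ Ψ0 i j) (h1nn : ∀ i j, 0 ≤ Ψ1 i j)
    (h0rs : ∀ i, ∑ j, Ψ0 i j < 1) (h1rs : ∀ i, ∑ j, Ψ1 i j < 1)
    (r0 r1 p : Fin n → ℝ)
    (Ψ : Finset (Fin n) → Matrix (Fin n) (Fin n) ℝ)
    (hΨ : ∀ T i k, Ψ T i k = if i ∈ T then Ψ1 i k else Ψ0 i k)
    (F : Finset (Fin n) → Fin n → ℝ)
    (hF : ∀ T, F T = (1 - Ψ T)⁻¹.mulVec (fun i => if i ∈ T then r1 i else r0 i))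
    (f : Finset (Fin n) → Fin n → ℝ)
    (hf : ∀ T i, f T i = (r1 i + Ψ1.mulVec (F T) i) - (r0 i + Ψ0.mulVec (F T) i))
    (S : Finset (Fin n)) (j : Fin n) (hj : j ∉ S)
    (x : ℝ) (hx : x = ((1 - Ψ (insert j S))ᵀ)⁻¹.mulVec p j) :
    (∑ k, p k * F (insert j S) k) = (∑ k, p k * F S k) + f S j * x := by
  have hΨnn : ∀ (U : Finset (Fin n)) i k, 0 ≤ Ψ U i k := by
    intro U i k
    rw [hΨ]
    split
    · exact h1nn i k
    · exact h0nn i k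
  have hΨrs : ∀ (U : Finset (Fin n)) i, ∑ k, Ψ U i k < 1 := by
    intro U i
    by_cases hi : i ∈ U
    · simpa [hΨ, hi] using h1rs i
    · simpa [hΨ, hi] using h0rs i
  have huT : IsUnit (1 - Ψ (insert j S)).det := unit_one_sub _ (hΨnn _) (hΨrs _)
  have huS : IsUnit (1 - Ψ S).det := unit_one_sub _ (hΨnn _) (hΨrs _)
  set A := 1 - Ψ (insert j S) with hA
  set B := 1 - Ψ S with hB
  set rS : Fin n → ℝ := fun i => if i ∈ S then r1 i else r0 i with hrS
  set rT : Fin n → ℝ := fun i => if i ∈ insert j S then r1 i else r0 i with hrT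
  have hBF : B *ᵥ F S = rS := by
    rw [hF S, Matrix.mulVec_mulVec, Matrix.mul_nonsing_inv _ huS, Matrix.one_mulVec]
  have hAF : A *ᵥ F S = fun i => rT i - f S j * (Pi.single j 1 : Fin n → ℝ) i := by
    funext i
    have hBFi : F S i - ∑ k, Ψ S i k * F S k = rS i := by
      have h := congrFun hBF i
      rw [hB, Matrix.sub_mulVec] at h
      simpa [Matrix.one_mulVec, Matrix.mulVec, dotProduct] using h
    have hAFi : (A *ᵥ F S) i = F S i - ∑ k, Ψ (insert j S) i k * F S k := by
      rw [hA, Matrix.sub_mulVec]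
      simp [Matrix.one_mulVec, Matrix.mulVec, dotProduct]
    rw [hAFi]
    by_cases hij : i = j
    · subst hij
      have hmem : i ∈ insert i S := Finset.mem_insert_self i S
      have h1 : ∑ k, Ψ (insert i S) i k * F S k = ∑ k, Ψ1 i k * F S k := by
        refine Finset.sum_congr rfl fun k _ => ?_
        rw [hΨ]; simp [hmem]
      have h0 : ∑ k, Ψ S i k * F S k = ∑ k, Ψ0 i k * F S k := by
        refine Finset.sum_congr rfl fun k _ => ?_
        rw [hΨ]; simp [hj]
      have hfi := hf S i
      simp only [Matrix.mulVec, dotProduct] at hfi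
      rw [h1]
      rw [h0] at hBFi
      simp only [hrS, hrT, if_neg hj, if_pos hmem, Pi.single_eq_same] at hBFi ⊢
      linarith
    · have hmem : (i ∈ insert j S) = (i ∈ S) := by
        simp [Finset.mem_insert, hij]
      have h1 : ∑ k, Ψ (insert j S) i k * F S k = ∑ k, Ψ S i k * F S k := by
        refine Finset.sum_congr rfl fun k _ => ?_
        rw [hΨ, hΨ]; simp only [hmem]
      rw [h1, hBFi]
      simp [hrS, hrT, Finset.mem_insert, hij, Pi.single_eq_of_ne hij]
  have hFT : ∀ k, F (insert j S) k = F S k + f S j * A⁻¹ k j := by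
    intro k
    have hrTeq : rT = fun i => (A *ᵥ F S) i + f S j * (Pi.single j 1 : Fin n → ℝ) i := by
      funext i
      rw [hAF]
      ring
    have : F (insert j S) = A⁻¹ *ᵥ rT := hF (insert j S)
    rw [this, hrTeq]
    have hsplit : (fun i => (A *ᵥ F S) i + f S j * (Pi.single j 1 : Fin n → ℝ) i)
        = (A *ᵥ F S) + f S j • (Pi.single j 1 : Fin n → ℝ) := by
      funext i; simp [Pi.smul_apply, smul_eq_mul]
    rw [hsplit, Matrix.mulVec_add, Matrix.mulVec_smul, Matrix.mulVec_mulVec,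
      Matrix.nonsing_inv_mul _ huT, Matrix.one_mulVec]
    simp [Matrix.mulVec_single, smul_eq_mul]
  have hxval : x = ∑ k, A⁻¹ k j * p k := by
    rw [hx, ← Matrix.transpose_nonsing_inv]
    simp [Matrix.mulVec, dotProduct, Matrix.transpose_apply, hA]
  calc (∑ k, p k * F (insert j S) k)
      = ∑ k, (p k * F S k + f S j * (A⁻¹ k j * p k)) := by
        refine Finset.sum_congr rfl fun k _ => ?_
        rw [hFT k]; ring
    _ = (∑ k, p k * F S k) + f S j * ∑ k, A⁻¹ k j * p k := by
        rw [Finset.sum_add_distrib, Finset.mul_sum]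
    _ = (∑ k, p k * F S k) + f S j * x := by rw [hxval]

theorem stmt6 {n : ℕ} (Ψ0 Ψ1 : Matrix (Fin n) (Fin n) ℝ)
    (h0nn : ∀ i j, 0 ≤ Ψ0 i j) (h1nn : ∀ i j, 0 ≤ Ψ1 i j)
    (h0rs : ∀ i, ∑ j, Ψ0 i j < 1) (h1rs : ∀ i, ∑ j, Ψ1 i j < 1)
    (r0 r1 q0 q1 : Fin n → ℝ)
    (p : Fin n → ℝ) (hp : ∀ k, 0 ≤ p k) (hp1 : ∑ k, p k = 1)
    (Ψ : Finset (Fin n) → Matrix (Fin n) (Fin n) ℝ)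
    (hΨ : ∀ T i k, Ψ T i k = if i ∈ T then Ψ1 i k else Ψ0 i k)
    (F G : Finset (Fin n) → Fin n → ℝ)
    (hF : ∀ T, F T = (1 - Ψ T)⁻¹.mulVec (fun i => if i ∈ T then r1 i else r0 i))
    (hG : ∀ T, G T = (1 - Ψ T)⁻¹.mulVec (fun i => if i ∈ T then q1 i else q0 i))
    (f g : Finset (Fin n) → Fin n → ℝ)
    (hf : ∀ T i, f T i = (r1 i + Ψ1.mulVec (F T) i) - (r0 i + Ψ0.mulVec (F T) i))
    (hg : ∀ T i, g T i = (q1 i + Ψ1.mulVec (G T) i) - (q0 i + Ψ0.mulVec (G T) i))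
    (S : Finset (Fin n)) (j : Fin n) (hj : j ∉ S)
    (x : ℝ) (hx : x = ((1 - Ψ (insert j S))ᵀ)⁻¹.mulVec p j) :
    0 ≤ x ∧
      (∑ k, p k * F (insert j S) k) = (∑ k, p k * F S k) + f S j * x ∧
      (∑ k, p k * G (insert j S) k) = (∑ k, p k * G S k) + g S j * x := by
  have hΨnn : ∀ (U : Finset (Fin n)) i k, 0 ≤ Ψ U i k := by
    intro U i k
    rw [hΨ]
    split
    · exact h1nn i k
    · exact h0nn i k
  have hΨrs : ∀ (U : Finset (Fin n)) i, ∑ k, Ψ U i k < 1 := by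
    intro U i
    by_cases hi : i ∈ U
    · simpa [hΨ, hi] using h1rs i
    · simpa [hΨ, hi] using h0rs i
  have hinvnn := inv_entry_nonneg (Ψ (insert j S)) (hΨnn _) (hΨrs _)
  have hxval : x = ∑ k, (1 - Ψ (insert j S))⁻¹ k j * p k := by
    rw [hx, ← Matrix.transpose_nonsing_inv]
    simp [Matrix.mulVec, dotProduct, Matrix.transpose_apply]
  have hx0 : 0 ≤ x := by
    rw [hxval]
    exact Finset.sum_nonneg fun k _ => mul_nonneg (hinvnn k j) (hp k)
  exact ⟨hx0,
    main_decomp Ψ0 Ψ1 h0nn h1nn h0rs h1rs r0 r1 p Ψ hΨ F hF f hf S j hj x hx,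
    main_decomp Ψ0 Ψ1 h0nn h1nn h0rs h1rs q0 q1 p Ψ hΨ G hG g hg S j hj x hx⟩
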